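/- Let A be a C*-algebra and φ a positive tracial linear functional on A. Then φ vanishes on every element a ∈ A with a² = 0, and more generally on every nilpotent element. -/

import Mathlib

open scoped ComplexOrder

section Auxiliary

variable {A : Type*} [CStarAlgebra A] [PartialOrder A] [StarOrderedRing A]

set_option linter.unusedSectionVars false

/-- Resolvent package: for `0 ≤ q` and `ε > 0` there is `r = (q + ε)⁻¹` with the
expected algebraic and norm properties. -/
theorem stmt18_resolvent_pack (q : A) (hq : 0 ≤ q) {ε : ℝ} (hε : 0 < ε) :
    ∃ r : A, q * r + ε • r = 1 ∧ q * r = r * q ∧ star r = r ∧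
      ‖r‖ ≤ ε⁻¹ ∧ ‖ε • r‖ ≤ 1 ∧ ‖r * q * r‖ ≤ (4 * ε)⁻¹ := by
  have hsa : IsSelfAdjoint q := IsSelfAdjoint.of_nonneg hq
  have hspec : ∀ t ∈ spectrum ℝ q, 0 ≤ t := fun t ht => spectrum_nonneg_of_nonneg hq ht
  have hpos : ∀ t ∈ spectrum ℝ q, 0 < t + ε := fun t ht => by linarith [hspec t ht]
  have hne : ∀ t ∈ spectrum ℝ q, t + ε ≠ 0 := fun t ht => (hpos t ht).ne'
  have hcont : ContinuousOn (fun t : ℝ => (t + ε)⁻¹) (spectrum ℝ q) :=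
    ((continuousOn_id.add continuousOn_const)).inv₀ hne
  have hcont' : ContinuousOn (fun t : ℝ => t) (spectrum ℝ q) := continuousOn_id
  set f : ℝ → ℝ := fun t => (t + ε)⁻¹ with hfdef
  have key1 : cfc (fun t : ℝ => t * f t) q = q * cfc f q := by
    rw [cfc_mul _ f q hcont' hcont, cfc_id' ℝ q]
  refine ⟨cfc f q, ?_, ?_, ?_, ?_, ?_, ?_⟩
  · have h2 : cfc (fun t : ℝ => ε * f t) q = ε • cfc f q := cfc_const_mul ε f q hcont
    rw [← key1, ← h2, ← cfc_add q (fun t : ℝ => t * f t) (fun t : ℝ => ε * f t) (hcont'.mul hcont) (continuousOn_const.mul hcont)]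
    calc cfc (fun t : ℝ => t * f t + ε * f t) q = cfc (fun _ : ℝ => (1:ℝ)) q := by
          apply cfc_congr; intro t ht
          have := hne t ht
          simp only [hfdef]
          field_simp
      _ = 1 := cfc_const_one ℝ q
  · rw [← key1, show cfc f q * q = cfc (fun t : ℝ => f t * t) q by
      rw [cfc_mul f _ q hcont hcont', cfc_id' ℝ q]]
    simp [mul_comm]
  · exact (cfc_predicate f q).star_eq
  · refine norm_cfc_le (by positivity) fun t ht => ?_
    have h1 := hpos t ht
    have h2 := hspec t ht
    rw [Real.norm_eq_abs, abs_of_pos (by positivity)]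
    exact inv_anti₀ hε (by linarith)
  · rw [norm_smul, Real.norm_eq_abs, abs_of_pos hε]
    have hr : ‖cfc f q‖ ≤ ε⁻¹ := by
      refine norm_cfc_le (by positivity) fun t ht => ?_
      have h1 := hpos t ht
      have h2 := hspec t ht
      rw [Real.norm_eq_abs, abs_of_pos (by positivity)]
      exact inv_anti₀ hε (by linarith)
    calc ε * ‖cfc f q‖ ≤ ε * ε⁻¹ := by nlinarith
      _ = 1 := mul_inv_cancel₀ hε.ne'
  · have : cfc (fun t : ℝ => f t * t * f t) q = cfc f q * q * cfc f q := by
      rw [cfc_mul (fun t : ℝ => f t * t) f q (hcont.mul hcont') hcont,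
        cfc_mul f _ q hcont hcont', cfc_id' ℝ q]
    rw [← this]
    refine norm_cfc_le (by positivity) fun t ht => ?_
    have h1 := hpos t ht
    have h2 := hspec t ht
    rw [Real.norm_eq_abs]
    have hval : (t + ε)⁻¹ * t * (t + ε)⁻¹ = t / ((t+ε)*(t+ε)) := by
      field_simp
    simp only [hfdef]
    rw [hval, abs_of_nonneg (by positivity), div_le_iff₀ (by positivity)]
    have hc : (4*ε) * (4*ε)⁻¹ = 1 := mul_inv_cancel₀ (by positivity)
    have hu : (0:ℝ) ≤ (4*ε)⁻¹ := by positivity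
    nlinarith [sq_nonneg (t - ε)]

/-- C*-norm bound: `‖r c‖ ≤ (2√ε)⁻¹` when `r` is selfadjoint and `‖r (c c*) r‖ ≤ (4ε)⁻¹`. -/
theorem stmt18_norm_res_mul (c r : A) {ε : ℝ} (hε : 0 < ε) (hstar : star r = r)
    (hbound : ‖r * (c * star c) * r‖ ≤ (4 * ε)⁻¹) :
    ‖r * c‖ ≤ (2 * Real.sqrt ε)⁻¹ := by
  have hsq : ‖r * c‖ * ‖r * c‖ = ‖r * (c * star c) * r‖ := by
    rw [← CStarRing.norm_self_mul_star (x := r * c), star_mul, hstar]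
    congr 1
    simp [mul_assoc]
  have hs : (0:ℝ) < Real.sqrt ε := Real.sqrt_pos.mpr hε
  have hB : (0:ℝ) < (2 * Real.sqrt ε)⁻¹ := by positivity
  have hBB : (2 * Real.sqrt ε)⁻¹ * (2 * Real.sqrt ε)⁻¹ = (4 * ε)⁻¹ := by
    rw [← mul_inv]
    congr 1
    have := Real.mul_self_sqrt hε.le
    nlinarith
  nlinarith [norm_nonneg (r * c), hsq, hbound, hBB, hB.le]

theorem stmt18_pow_shift (s a : A) : ∀ m : ℕ, (s * a) ^ (m + 1) = s * (a * s) ^ m * a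
  | 0 => by simp
  | m + 1 => by
    rw [pow_succ, stmt18_pow_shift s a m, pow_succ]
    simp only [mul_assoc]

theorem stmt18_pow_perturb (a d : A) (ha : ‖a‖ ≤ 1) (hd : ‖d‖ ≤ 1) :
    ∀ m : ℕ, ‖(a + d) ^ m - a ^ m‖ ≤ 2 ^ m * ‖d‖
  | 0 => by simp
  | m + 1 => by
    have had : ‖a + d‖ ≤ 2 := by
      calc ‖a + d‖ ≤ ‖a‖ + ‖d‖ := norm_add_le a d
        _ ≤ 2 := by linarith
    have hpow : ‖(a + d) ^ m * d‖ ≤ 2 ^ m * ‖d‖ := by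
      match m with
      | 0 => simp
      | k + 1 =>
        calc ‖(a + d) ^ (k+1) * d‖ ≤ ‖(a + d) ^ (k+1)‖ * ‖d‖ := norm_mul_le _ _
          _ ≤ 2 ^ (k+1) * ‖d‖ := by
              gcongr
              calc ‖(a + d) ^ (k+1)‖ ≤ ‖a + d‖ ^ (k+1) := norm_pow_le' (a+d) k.succ_pos
                _ ≤ 2 ^ (k+1) := pow_le_pow_left₀ (norm_nonneg _) had (k+1)
    have key : (a + d) ^ (m+1) - a ^ (m+1) = ((a + d) ^ m - a ^ m) * a + (a + d) ^ m * d := by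
      rw [pow_succ, pow_succ]; noncomm_ring
    rw [key]
    calc ‖((a + d) ^ m - a ^ m) * a + (a + d) ^ m * d‖
        ≤ ‖((a + d) ^ m - a ^ m) * a‖ + ‖(a + d) ^ m * d‖ := norm_add_le _ _
      _ ≤ ‖(a + d) ^ m - a ^ m‖ * ‖a‖ + 2 ^ m * ‖d‖ := by
          exact add_le_add (norm_mul_le _ _) hpow
      _ ≤ 2 ^ (m+1) * ‖d‖ := by
          have h1 := stmt18_pow_perturb a d ha hd m
          have h3 := norm_nonneg ((a+d)^m - a^m)
          have h4 := norm_nonneg a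
          have h5 := norm_nonneg d
          rw [pow_succ]
          nlinarith [mul_le_mul_of_nonneg_left ha h3]

/-- The key quantitative bound: for a tracial continuous functional, `‖φ a‖` is small
whenever `‖a‖ ≤ 1` and `‖a ^ n‖` is sufficiently small. -/
theorem stmt18_key_bound (φ : A →L[ℂ] ℂ) (htr : ∀ a b : A, φ (a * b) = φ (b * a)) :
    ∀ n : ℕ, 1 ≤ n → ∀ c : ℝ, 0 < c → ∃ θ : ℝ, 0 < θ ∧
      ∀ a : A, ‖a‖ ≤ 1 → ‖a ^ n‖ ≤ θ → ‖φ a‖ ≤ c := by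
  refine Nat.le_induction ?_ ?_
  · -- base case n = 1
    intro c hc
    refine ⟨c / (‖φ‖ + 1), by positivity, fun a ha h1 => ?_⟩
    rw [pow_one] at h1
    have h2 : ‖φ a‖ ≤ ‖φ‖ * ‖a‖ := φ.le_opNorm a
    have h3 : (0:ℝ) ≤ ‖φ‖ := norm_nonneg _
    have h4 : c / (‖φ‖ + 1) * (‖φ‖ + 1) = c := div_mul_cancel₀ _ (by positivity)
    nlinarith [norm_nonneg a]
  · -- inductive step
    intro n hn IH c hc
    obtain ⟨θn, hθn, Hn⟩ := IH (c / 2) (by positivity)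
    set θ' : ℝ := min θn 1 with hθ'def
    have hθ'pos : 0 < θ' := lt_min hθn one_pos
    have hθ'le1 : θ' ≤ 1 := min_le_right _ _
    set ε : ℝ := θ' ^ 2 with hεdef
    have hε : 0 < ε := by positivity
    set M : ℝ := min (θ' / 2 ^ (n + 1)) (min 1 (c / (2 * (‖φ‖ + 1)))) with hMdef
    have hM : 0 < M := by
      refine lt_min (by positivity) (lt_min one_pos (by positivity))
    refine ⟨ε * M, by positivity, fun a ha hδ => ?_⟩
    set q : A := a ^ n * star (a ^ n) with hqdef
    have hq : 0 ≤ q := mul_star_self_nonneg _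
    obtain ⟨r, hr1, hr2, hr3, hr4, hr5, hr6⟩ := stmt18_resolvent_pack q hq hε
    have hapow : ‖a ^ n‖ ≤ 1 := by
      calc ‖a ^ n‖ ≤ ‖a‖ ^ n := norm_pow_le' a (by omega)
        _ ≤ 1 := pow_le_one₀ (norm_nonneg a) ha
    -- the small term d = a * (q * r)
    have hqr : a * (q * r) = a ^ (n+1) * (star (a ^ n) * r) := by
      rw [hqdef, pow_succ']
      simp only [mul_assoc]
    have hd : ‖a * (q * r)‖ ≤ M := by
      rw [hqr]
      calc ‖a ^ (n+1) * (star (a ^ n) * r)‖ ≤ ‖a ^ (n+1)‖ * (‖star (a ^ n)‖ * ‖r‖) :=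
            (norm_mul_le _ _).trans (by gcongr; exact norm_mul_le _ _)
        _ ≤ (ε * M) * (1 * ε⁻¹) := by
            have h2 : ‖star (a ^ n)‖ * ‖r‖ ≤ 1 * ε⁻¹ :=
              mul_le_mul (by rw [norm_star]; exact hapow) hr4 (norm_nonneg r) one_pos.le
            exact mul_le_mul hδ h2 (by positivity) (by positivity)
        _ = M := by field_simp
    have hdle1 : ‖a * (q * r)‖ ≤ 1 := hd.trans ((min_le_right _ _).trans (min_le_left _ _))
    -- split φ a
    set x : A := (1 - q * r) * a with hxdef
    have hsplit : φ a = φ x + φ (q * r * a) := by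
      rw [← map_add]
      congr 1
      rw [hxdef]; noncomm_ring
    have hterm2 : ‖φ (q * r * a)‖ ≤ c / 2 := by
      rw [htr (q * r) a]
      calc ‖φ (a * (q * r))‖ ≤ ‖φ‖ * ‖a * (q * r)‖ := φ.le_opNorm _
        _ ≤ ‖φ‖ * (c / (2 * (‖φ‖ + 1))) := by
            gcongr
            exact hd.trans ((min_le_right _ _).trans (min_le_right _ _))
        _ ≤ c / 2 := by
            have hN : (0:ℝ) ≤ ‖φ‖ := norm_nonneg _
            have h4 : c / (2 * (‖φ‖ + 1)) * (2 * (‖φ‖ + 1)) = c := div_mul_cancel₀ _ (by positivity)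
            nlinarith
    -- norm of s = 1 - q*r
    have hseq : (1 : A) - q * r = ε • r := by
      rw [← hr1]; abel
    have hx_norm : ‖x‖ ≤ 1 := by
      calc ‖(1 - q * r) * a‖ ≤ ‖(1 : A) - q * r‖ * ‖a‖ := norm_mul_le _ _
        _ ≤ 1 * 1 := mul_le_mul (by rw [hseq]; exact hr5) ha (norm_nonneg a) one_pos.le
        _ = 1 := one_mul 1
    -- x ^ n bound
    obtain ⟨m, rfl⟩ : ∃ m, n = m + 1 := ⟨n - 1, (Nat.succ_pred_eq_of_pos (by omega)).symm⟩
    have hxpow : ‖x ^ (m + 1)‖ ≤ θn := by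
      have h0 : x ^ (m + 1) = (1 - q * r) * (a * (1 - q * r)) ^ m * a := stmt18_pow_shift _ a m
      have has : a * (1 - q * r) = a + -(a * (q * r)) := by noncomm_ring
      have hpert : ‖(a + -(a * (q * r))) ^ m - a ^ m‖ ≤ 2 ^ m * ‖a * (q * r)‖ := by
        simpa using stmt18_pow_perturb a (-(a * (q * r))) ha (by simpa using hdle1) m
      have hdec : x ^ (m + 1) = ε • (r * a ^ (m + 1))
          + (1 - q * r) * ((a + -(a * (q * r))) ^ m - a ^ m) * a := by
        rw [h0, has]
        have : (1 - q * r) * (a + -(a * (q * r))) ^ m * a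
            = (1 - q * r) * a ^ m * a
              + (1 - q * r) * ((a + -(a * (q * r))) ^ m - a ^ m) * a := by noncomm_ring
        rw [this, hseq]
        congr 1
        rw [smul_mul_assoc, smul_mul_assoc, mul_assoc, ← pow_succ]
      have hnorm1 : ‖ε • (r * a ^ (m + 1))‖ ≤ θ' / 2 := by
        have hb : ‖r * a ^ (m + 1)‖ ≤ (2 * Real.sqrt ε)⁻¹ := by
          refine stmt18_norm_res_mul (a ^ (m+1)) r hε hr3 ?_
          rw [← hqdef]; exact hr6
        rw [norm_smul, Real.norm_eq_abs, abs_of_pos hε]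
        have hsqrt : Real.sqrt ε = θ' := by
          rw [hεdef, Real.sqrt_sq hθ'pos.le]
        calc ε * ‖r * a ^ (m + 1)‖ ≤ ε * (2 * Real.sqrt ε)⁻¹ := by gcongr
          _ = θ' / 2 := by rw [hsqrt, hεdef]; field_simp
      have hnorm2 : ‖(1 - q * r) * ((a + -(a * (q * r))) ^ m - a ^ m) * a‖ ≤ θ' / 4 := by
        have hdm : ‖a * (q * r)‖ ≤ θ' / 2 ^ (m + 2) :=
          hd.trans (min_le_left _ _)
        calc ‖(1 - q * r) * ((a + -(a * (q * r))) ^ m - a ^ m) * a‖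
            ≤ ‖(1 : A) - q * r‖ * ‖(a + -(a * (q * r))) ^ m - a ^ m‖ * ‖a‖ :=
              (norm_mul_le _ _).trans (by gcongr; exact norm_mul_le _ _)
          _ ≤ 1 * (2 ^ m * (θ' / 2 ^ (m + 2))) * 1 := by
              have hA : ‖(1:A) - q * r‖ ≤ 1 := by rw [hseq]; exact hr5
              have hB : ‖(a + -(a * (q * r))) ^ m - a ^ m‖ ≤ 2 ^ m * (θ' / 2 ^ (m + 2)) :=
                hpert.trans (by gcongr)
              exact mul_le_mul (mul_le_mul hA hB (norm_nonneg _) one_pos.le) ha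
                (norm_nonneg a) (by positivity)
          _ = θ' / 4 := by
              rw [one_mul, mul_one, pow_add]
              field_simp
              ring
      calc ‖x ^ (m + 1)‖ ≤ ‖ε • (r * a ^ (m + 1))‖
            + ‖(1 - q * r) * ((a + -(a * (q * r))) ^ m - a ^ m) * a‖ := by
            rw [hdec]; exact norm_add_le _ _
        _ ≤ θ' / 2 + θ' / 4 := add_le_add hnorm1 hnorm2
        _ ≤ θ' := by linarith
        _ ≤ θn := min_le_left _ _
    have hφx : ‖φ x‖ ≤ c / 2 := Hn x hx_norm hxpow
    calc ‖φ a‖ = ‖φ x + φ (q * r * a)‖ := by rw [hsplit]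
      _ ≤ ‖φ x‖ + ‖φ (q * r * a)‖ := norm_add_le _ _
      _ ≤ c / 2 + c / 2 := add_le_add hφx hterm2
      _ = c := by ring

end Auxiliary

/-- A positive tracial linear functional on a C*-algebra vanishes on every square-zero
element, and more generally on every nilpotent element. -/
theorem stmt18 {A : Type*} [CStarAlgebra A] [PartialOrder A] [StarOrderedRing A]
    (φ : A →L[ℂ] ℂ)
    (hpos : ∀ x : A, 0 ≤ φ (star x * x))
    (htr : ∀ a b : A, φ (a * b) = φ (b * a)) :
    (∀ a : A, a * a = 0 → φ a = 0) ∧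
    (∀ (a : A) (n : ℕ), 0 < n → a ^ n = 0 → φ a = 0) := by
  have part2 : ∀ (a : A) (n : ℕ), 0 < n → a ^ n = 0 → φ a = 0 := by
    intro a n hn han
    rcases eq_or_ne a 0 with rfl | ha0
    · simp
    have hna : (0:ℝ) < ‖a‖ := norm_pos_iff.mpr ha0
    set b : A := ((‖a‖ : ℂ))⁻¹ • a with hbdef
    have hb1 : ‖b‖ ≤ 1 := by
      rw [hbdef, norm_smul, norm_inv, Complex.norm_real, Real.norm_eq_abs,
        abs_of_pos hna, inv_mul_cancel₀ hna.ne']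
    have hbn : b ^ n = 0 := by rw [hbdef, smul_pow, han, smul_zero]
    have hφb : φ b = 0 := by
      have hbound : ∀ c : ℝ, 0 < c → ‖φ b‖ ≤ c := by
        intro c hc
        obtain ⟨θ, hθ, H⟩ := stmt18_key_bound φ htr n hn c hc
        refine H b hb1 ?_
        rw [hbn, norm_zero]
        exact hθ.le
      have h0 : ‖φ b‖ ≤ 0 := by
        by_contra h
        push_neg at h
        have := hbound (‖φ b‖ / 2) (by positivity)
        linarith
      exact norm_le_zero_iff.mp h0
    have hab : a = ((‖a‖ : ℂ)) • b := by
      rw [hbdef, smul_smul, mul_inv_cancel₀ (by exact_mod_cast hna.ne'), one_smul]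
    rw [hab, map_smul, hφb, smul_zero]
  exact ⟨fun a ha => part2 a 2 two_pos (by rw [pow_two, ha]), part2⟩
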